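/- Suppose n ≥ 3 and β_i ≠ 0 and β_j ≠ 0 for two distinct indices i ≠ j with 4 ≤ i, j ≤ n. Then every even derivation of the Leibniz superalgebra H(β₄,…,β_n,δ,γ) is nilpotent. In particular, there is no non-nilpotent solvable Leibniz superalgebra whose nilradical is such an H(β₄,…,β_n,δ,γ). -/

import Mathlib

noncomputable def ceF {V : Type*} [AddCommGroup V] [Module ℂ V] {n : ℕ}
    (bas : Module.Basis (Fin n ⊕ Fin n) ℂ V) (m : ℕ) : V →ₗ[ℂ] ℂ :=
  if h : 1 ≤ m ∧ m ≤ n then bas.coord (Sum.inl ⟨m - 1, Nat.sub_one_lt_of_le h.1 h.2⟩) else 0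

noncomputable def cyF {V : Type*} [AddCommGroup V] [Module ℂ V] {n : ℕ}
    (bas : Module.Basis (Fin n ⊕ Fin n) ℂ V) (m : ℕ) : V →ₗ[ℂ] ℂ :=
  if h : 1 ≤ m ∧ m ≤ n then bas.coord (Sum.inr ⟨m - 1, Nat.sub_one_lt_of_le h.1 h.2⟩) else 0

section
variable {V : Type*} [AddCommGroup V] [Module ℂ V] {n : ℕ}
  (bas : Module.Basis (Fin n ⊕ Fin n) ℂ V) (eN yN : ℕ → V)

lemma ceF_eN (heN : ∀ k (h : 1 ≤ k ∧ k ≤ n), eN k = bas (Sum.inl ⟨k - 1, Nat.sub_one_lt_of_le h.1 h.2⟩))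
    (heN0 : ∀ k, ¬(1 ≤ k ∧ k ≤ n) → eN k = 0) (m k : ℕ) (hm : 1 ≤ m ∧ m ≤ n) :
    ceF bas m (eN k) = if k = m then 1 else 0 := by
  by_cases hk : 1 ≤ k ∧ k ≤ n
  · rw [heN k hk]
    unfold ceF
    rw [dif_pos hm, Module.Basis.coord_apply, Module.Basis.repr_self, Finsupp.single_apply]
    by_cases hkm : k = m
    · subst hkm; simp
    · rw [if_neg (by simp [Fin.ext_iff]; omega), if_neg hkm]
  · rw [heN0 k hk, map_zero, if_neg (by omega)]

lemma ceF_yN (hyN : ∀ k (h : 1 ≤ k ∧ k ≤ n), yN k = bas (Sum.inr ⟨k - 1, Nat.sub_one_lt_of_le h.1 h.2⟩))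
    (hyN0 : ∀ k, ¬(1 ≤ k ∧ k ≤ n) → yN k = 0) (m k : ℕ) (hm : 1 ≤ m ∧ m ≤ n) :
    ceF bas m (yN k) = 0 := by
  by_cases hk : 1 ≤ k ∧ k ≤ n
  · rw [hyN k hk]
    unfold ceF
    rw [dif_pos hm, Module.Basis.coord_apply, Module.Basis.repr_self, Finsupp.single_apply]
    rw [if_neg (by simp)]
  · rw [hyN0 k hk, map_zero]

lemma cyF_yN (hyN : ∀ k (h : 1 ≤ k ∧ k ≤ n), yN k = bas (Sum.inr ⟨k - 1, Nat.sub_one_lt_of_le h.1 h.2⟩))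
    (hyN0 : ∀ k, ¬(1 ≤ k ∧ k ≤ n) → yN k = 0) (m k : ℕ) (hm : 1 ≤ m ∧ m ≤ n) :
    cyF bas m (yN k) = if k = m then 1 else 0 := by
  by_cases hk : 1 ≤ k ∧ k ≤ n
  · rw [hyN k hk]
    unfold cyF
    rw [dif_pos hm, Module.Basis.coord_apply, Module.Basis.repr_self, Finsupp.single_apply]
    by_cases hkm : k = m
    · subst hkm; simp
    · rw [if_neg (by simp [Fin.ext_iff]; omega), if_neg hkm]
  · rw [hyN0 k hk, map_zero, if_neg (by omega)]

lemma cyF_eN (heN : ∀ k (h : 1 ≤ k ∧ k ≤ n), eN k = bas (Sum.inl ⟨k - 1, Nat.sub_one_lt_of_le h.1 h.2⟩))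
    (heN0 : ∀ k, ¬(1 ≤ k ∧ k ≤ n) → eN k = 0) (m k : ℕ) (hm : 1 ≤ m ∧ m ≤ n) :
    cyF bas m (eN k) = 0 := by
  by_cases hk : 1 ≤ k ∧ k ≤ n
  · rw [heN k hk]
    unfold cyF
    rw [dif_pos hm, Module.Basis.coord_apply, Module.Basis.repr_self, Finsupp.single_apply]
    rw [if_neg (by simp)]
  · rw [heN0 k hk, map_zero]

lemma span_repr_eN (heN : ∀ k (h : 1 ≤ k ∧ k ≤ n), eN k = bas (Sum.inl ⟨k - 1, Nat.sub_one_lt_of_le h.1 h.2⟩))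
    (v : V) (hv : v ∈ Submodule.span ℂ (Set.range fun i : Fin n => bas (Sum.inl i))) :
    v = ∑ m ∈ Finset.Icc 1 n, ceF bas m v • eN m := by
  have h1 : ∀ i : Fin n, bas.repr v (Sum.inr i) = 0 := by
    intro i
    have hle : Submodule.span ℂ (Set.range fun i : Fin n => bas (Sum.inl i)) ≤
        LinearMap.ker (bas.coord (Sum.inr i)) := by
      rw [Submodule.span_le]
      rintro x ⟨j, rfl⟩
      simp [LinearMap.mem_ker, Module.Basis.coord_apply, Module.Basis.repr_self, Finsupp.single_apply]
    simpa [Module.Basis.coord_apply] using hle hv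
  have h2 := bas.sum_repr v
  rw [Fintype.sum_sum_type] at h2
  have h3 : ∑ b : Fin n, bas.repr v (Sum.inr b) • bas (Sum.inr b) = 0 :=
    Finset.sum_eq_zero fun b _ => by rw [h1 b, zero_smul]
  rw [h3, add_zero] at h2
  rw [← Finset.Ico_add_one_right_eq_Icc, Finset.sum_Ico_eq_sum_range]
  simp only [Nat.add_sub_cancel, Nat.succ_sub_one]
  rw [Finset.sum_range fun i => ceF bas (1 + i) v • eN (1 + i)]
  conv_lhs => rw [← h2]
  refine Finset.sum_congr rfl fun i _ => ?_
  have hi : 1 ≤ 1 + (i : ℕ) ∧ 1 + (i : ℕ) ≤ n := ⟨by omega, by omega⟩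
  rw [heN _ hi]
  unfold ceF
  rw [dif_pos hi]
  have : (⟨1 + (i : ℕ) - 1, by omega⟩ : Fin n) = i := by
    apply Fin.ext; simp
  rw [this, Module.Basis.coord_apply]

lemma span_repr_yN (hyN : ∀ k (h : 1 ≤ k ∧ k ≤ n), yN k = bas (Sum.inr ⟨k - 1, Nat.sub_one_lt_of_le h.1 h.2⟩))
    (v : V) (hv : v ∈ Submodule.span ℂ (Set.range fun i : Fin n => bas (Sum.inr i))) :
    v = ∑ m ∈ Finset.Icc 1 n, cyF bas m v • yN m := by
  have h1 : ∀ i : Fin n, bas.repr v (Sum.inl i) = 0 := by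
    intro i
    have hle : Submodule.span ℂ (Set.range fun i : Fin n => bas (Sum.inr i)) ≤
        LinearMap.ker (bas.coord (Sum.inl i)) := by
      rw [Submodule.span_le]
      rintro x ⟨j, rfl⟩
      simp [LinearMap.mem_ker, Module.Basis.coord_apply, Module.Basis.repr_self, Finsupp.single_apply]
    simpa [Module.Basis.coord_apply] using hle hv
  have h2 := bas.sum_repr v
  rw [Fintype.sum_sum_type] at h2
  have h3 : ∑ b : Fin n, bas.repr v (Sum.inl b) • bas (Sum.inl b) = 0 :=
    Finset.sum_eq_zero fun b _ => by rw [h1 b, zero_smul]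
  rw [h3, zero_add] at h2
  rw [← Finset.Ico_add_one_right_eq_Icc, Finset.sum_Ico_eq_sum_range]
  simp only [Nat.add_sub_cancel, Nat.succ_sub_one]
  rw [Finset.sum_range fun i => cyF bas (1 + i) v • yN (1 + i)]
  conv_lhs => rw [← h2]
  refine Finset.sum_congr rfl fun i _ => ?_
  have hi : 1 ≤ 1 + (i : ℕ) ∧ 1 + (i : ℕ) ≤ n := ⟨by omega, by omega⟩
  rw [hyN _ hi]
  unfold cyF
  rw [dif_pos hi]
  have : (⟨1 + (i : ℕ) - 1, by omega⟩ : Fin n) = i := by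
    apply Fin.ext; simp
  rw [this, Module.Basis.coord_apply]

lemma nilp_of_filtration (d : Module.End ℂ V) (S : ℕ → Submodule ℂ V)
    (h0 : ∀ v : V, v ∈ S 0) (hstep : ∀ k, ∀ v ∈ S k, d v ∈ S (k + 1))
    (N : ℕ) (hN : ∀ v ∈ S N, v = 0) : d ^ N = 0 := by
  have key : ∀ k (v : V), (d ^ k) v ∈ S k := by
    intro k
    induction k with
    | zero => intro v; simpa using h0 v
    | succ k ih =>
        intro v
        rw [pow_succ']
        exact hstep k _ (ih v)
  ext v
  simpa using hN _ (key N v)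

end

set_option maxHeartbeats 1000000 in
/-- If β_i ≠ 0 and β_j ≠ 0 for two distinct indices 4 ≤ i, j ≤ n, then every even
derivation of H(β₄,…,β_n,δ,γ) is nilpotent. -/
theorem statement10 {V : Type*} [AddCommGroup V] [Module ℂ V]
    (n : ℕ) (hn : 3 ≤ n) (β : ℕ → ℂ) (δ γ : ℂ)
    (bas : Module.Basis (Fin n ⊕ Fin n) ℂ V)
    (eN yN : ℕ → V)
    (heN : ∀ k (h : 1 ≤ k ∧ k ≤ n), eN k = bas (Sum.inl ⟨k - 1, by omega⟩))
    (heN0 : ∀ k, ¬(1 ≤ k ∧ k ≤ n) → eN k = 0)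
    (hyN : ∀ k (h : 1 ≤ k ∧ k ≤ n), yN k = bas (Sum.inr ⟨k - 1, by omega⟩))
    (hyN0 : ∀ k, ¬(1 ≤ k ∧ k ≤ n) → yN k = 0)
    (br : V →ₗ[ℂ] V →ₗ[ℂ] V)
    -- multiplication table (4):
    (hee1 : ∀ i, 1 ≤ i → i ≤ n →
      br (eN i) (eN 1) = if i = 1 then eN 3 else if i = 2 then 0 else eN (i + 1))
    (hee2a : br (eN 1) (eN 2) = ∑ k ∈ Finset.Icc 4 n, β k • eN k)
    (hee2b : br (eN 2) (eN 2) = γ • eN n)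
    (hee2c : ∀ i, 3 ≤ i → i ≤ n →
      br (eN i) (eN 2) = ∑ k ∈ Finset.Icc 4 n, β k • eN (i + k - 2))
    (hee0 : ∀ i j, 1 ≤ i → i ≤ n → 3 ≤ j → j ≤ n → br (eN i) (eN j) = 0)
    (hye1 : ∀ j, 1 ≤ j → j ≤ n → br (yN j) (eN 1) = yN (j + 1))
    (hye2a : br (yN 1) (eN 2) = (∑ k ∈ Finset.Icc 4 n, β k • yN (k - 1)) + δ • yN n)
    (hye2b : ∀ j, 2 ≤ j → j ≤ n →
      br (yN j) (eN 2) = ∑ k ∈ Finset.Icc 4 n, β k • yN (j + k - 2))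
    (hye0 : ∀ j i, 1 ≤ j → j ≤ n → 3 ≤ i → i ≤ n → br (yN j) (eN i) = 0)
    (hey1 : ∀ i, 1 ≤ i → i ≤ n → br (eN i) (yN 1) =
      if i = 1 then (1 / 2 : ℂ) • yN 2 else if i = 2 then 0 else (1 / 2 : ℂ) • yN i)
    (hey0 : ∀ i j, 1 ≤ i → i ≤ n → 2 ≤ j → j ≤ n → br (eN i) (yN j) = 0)
    (hyy1 : ∀ j, 1 ≤ j → j ≤ n →
      br (yN j) (yN 1) = if j = 1 then eN 1 else eN (j + 1))
    (hyy0 : ∀ j k, 1 ≤ j → j ≤ n → 2 ≤ k → k ≤ n → br (yN j) (yN k) = 0)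
    -- d is an even derivation:
    (d : Module.End ℂ V)
    (hdE : ∀ x ∈ Submodule.span ℂ (Set.range fun i : Fin n => bas (Sum.inl i)),
      d x ∈ Submodule.span ℂ (Set.range fun i : Fin n => bas (Sum.inl i)))
    (hdY : ∀ x ∈ Submodule.span ℂ (Set.range fun j : Fin n => bas (Sum.inr j)),
      d x ∈ Submodule.span ℂ (Set.range fun j : Fin n => bas (Sum.inr j)))
    (hder : ∀ u v : V, d (br u v) = br (d u) v + br u (d v))
    (hij : ∃ i j, i ≠ j ∧ 4 ≤ i ∧ i ≤ n ∧ 4 ≤ j ∧ j ≤ n ∧ β i ≠ 0 ∧ β j ≠ 0) :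
    ∃ N : ℕ, d ^ N = 0 := by
  obtain ⟨p, q, hpq, hp4, hpn, hq4, hqn, hbp, hbq⟩ := hij
  -- basic membership facts
  have memE : ∀ k, 1 ≤ k → k ≤ n →
      eN k ∈ Submodule.span ℂ (Set.range fun i : Fin n => bas (Sum.inl i)) := by
    intro k h1 h2
    rw [heN k ⟨h1, h2⟩]
    exact Submodule.subset_span ⟨_, rfl⟩
  have memY : ∀ k, 1 ≤ k → k ≤ n →
      yN k ∈ Submodule.span ℂ (Set.range fun j : Fin n => bas (Sum.inr j)) := by
    intro k h1 h2
    rw [hyN k ⟨h1, h2⟩]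
    exact Submodule.subset_span ⟨_, rfl⟩
  -- coefficient expansions of d on the generators
  obtain ⟨a, hA⟩ : ∃ a : ℕ → ℂ, d (eN 1) = ∑ m ∈ Finset.Icc 1 n, a m • eN m :=
    ⟨_, span_repr_eN bas eN heN _ (hdE _ (memE 1 le_rfl (by omega)))⟩
  obtain ⟨c, hC⟩ : ∃ c : ℕ → ℂ, d (eN 2) = ∑ m ∈ Finset.Icc 1 n, c m • eN m :=
    ⟨_, span_repr_eN bas eN heN _ (hdE _ (memE 2 (by omega) (by omega)))⟩
  obtain ⟨b, hB⟩ : ∃ b : ℕ → ℂ, d (yN 1) = ∑ m ∈ Finset.Icc 1 n, b m • yN m :=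
    ⟨_, span_repr_yN bas yN hyN _ (hdY _ (memY 1 le_rfl (by omega)))⟩
  -- coordinate functional evaluations
  have ceE : ∀ m k, 1 ≤ m → m ≤ n → ceF bas m (eN k) = if k = m then 1 else 0 :=
    fun m k h1 h2 => ceF_eN bas eN heN heN0 m k ⟨h1, h2⟩
  have ceY : ∀ m k, 1 ≤ m → m ≤ n → ceF bas m (yN k) = 0 :=
    fun m k h1 h2 => ceF_yN bas yN hyN hyN0 m k ⟨h1, h2⟩
  have cyY : ∀ m k, 1 ≤ m → m ≤ n → cyF bas m (yN k) = if k = m then 1 else 0 :=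
    fun m k h1 h2 => cyF_yN bas yN hyN hyN0 m k ⟨h1, h2⟩
  have cyE : ∀ m k, 1 ≤ m → m ≤ n → cyF bas m (eN k) = 0 :=
    fun m k h1 h2 => cyF_eN bas eN heN heN0 m k ⟨h1, h2⟩
  -- zero values of eN outside range
  have eN0 : ∀ m, n < m → eN m = 0 := fun m hm => heN0 m (by omega)
  have yN0 : ∀ m, n < m → yN m = 0 := fun m hm => hyN0 m (by omega)
  -- br (eN m) (eN 1) = eN (m+1) for all m ≥ 3
  have bre1 : ∀ m, 3 ≤ m → br (eN m) (eN 1) = eN (m + 1) := by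
    intro m hm
    by_cases h : m ≤ n
    · rw [hee1 m (by omega) h, if_neg (by omega), if_neg (by omega)]
    · rw [eN0 m (by omega), eN0 (m + 1) (by omega), map_zero, LinearMap.zero_apply]
  -- Step A : the identity coming from e1 = [y1,y1]
  have eqA : ∑ m ∈ Finset.Icc 1 n, a m • eN m =
      (∑ m ∈ Finset.Icc 1 n, b m • (if m = 1 then eN 1 else eN (m + 1))) + b 1 • eN 1 := by
    have h0 : br (yN 1) (yN 1) = eN 1 := by
      rw [hyy1 1 le_rfl (by omega), if_pos rfl]
    have h := hder (yN 1) (yN 1)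
    rw [h0, hA, hB] at h
    simp only [map_sum, map_smul, LinearMap.sum_apply, LinearMap.smul_apply] at h
    have hfst : ∀ m ∈ Finset.Icc 1 n,
        b m • br (yN m) (yN 1) = b m • (if m = 1 then eN 1 else eN (m + 1)) := by
      intro m hm
      rw [Finset.mem_Icc] at hm
      rw [hyy1 m hm.1 hm.2]
    have hsnd : ∑ m ∈ Finset.Icc 1 n, b m • br (yN 1) (yN m) = b 1 • eN 1 := by
      rw [Finset.sum_eq_single_of_mem 1 (by simp [Finset.mem_Icc]; omega)]
      · rw [h0]
      · intro m hm hne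
        rw [Finset.mem_Icc] at hm
        rw [hyy0 1 m le_rfl (by omega) (by omega) hm.2, smul_zero]
    rw [Finset.sum_congr rfl hfst, hsnd] at h
    exact h
  have ha2 : a 2 = 0 := by
    have h := congrArg (⇑(ceF bas 2)) eqA
    simp only [map_add, map_sum, map_smul, smul_eq_mul] at h
    have hL : ∑ m ∈ Finset.Icc 1 n, a m * ceF bas 2 (eN m) = a 2 := by
      rw [Finset.sum_eq_single_of_mem 2 (by simp [Finset.mem_Icc]; omega)]
      · rw [ceE 2 2 (by omega) (by omega), if_pos rfl, mul_one]
      · intro m hm hne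
        rw [ceE 2 m (by omega) (by omega), if_neg hne, mul_zero]
    have hR1 : ∑ m ∈ Finset.Icc 1 n,
        b m * ceF bas 2 (if m = 1 then eN 1 else eN (m + 1)) = 0 := by
      apply Finset.sum_eq_zero
      intro m hm
      rw [Finset.mem_Icc] at hm
      by_cases h1 : m = 1
      · subst h1
        rw [if_pos rfl, ceE 2 1 (by omega) (by omega), if_neg (by omega), mul_zero]
      · rw [if_neg h1, ceE 2 (m + 1) (by omega) (by omega), if_neg (by omega), mul_zero]
    have hR2 : ceF bas 2 (eN 1) = 0 := by
      rw [ceE 2 1 (by omega) (by omega), if_neg (by omega)]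
    rw [hL, hR1, hR2, mul_zero, zero_add] at h
    exact h
  have hab : a 1 = 2 * b 1 := by
    have h := congrArg (⇑(ceF bas 1)) eqA
    simp only [map_add, map_sum, map_smul, smul_eq_mul] at h
    have hL : ∑ m ∈ Finset.Icc 1 n, a m * ceF bas 1 (eN m) = a 1 := by
      rw [Finset.sum_eq_single_of_mem 1 (by simp [Finset.mem_Icc]; omega)]
      · rw [ceE 1 1 (by omega) (by omega), if_pos rfl, mul_one]
      · intro m hm hne
        rw [ceE 1 m (by omega) (by omega), if_neg hne, mul_zero]
    have hR1 : ∑ m ∈ Finset.Icc 1 n,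
        b m * ceF bas 1 (if m = 1 then eN 1 else eN (m + 1)) = b 1 := by
      rw [Finset.sum_eq_single_of_mem 1 (by simp [Finset.mem_Icc]; omega)]
      · rw [if_pos rfl, ceE 1 1 (by omega) (by omega), if_pos rfl, mul_one]
      · intro m hm hne
        rw [Finset.mem_Icc] at hm
        rw [if_neg hne, ceE 1 (m + 1) (by omega) (by omega), if_neg (by omega), mul_zero]
    have hR2 : ceF bas 1 (eN 1) = 1 := by
      rw [ceE 1 1 (by omega) (by omega), if_pos rfl]
    rw [hL, hR1, hR2, mul_one] at h
    linear_combination h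
  -- Step B : formula for d (eN i), 3 ≤ i ≤ n
  have split3 : Finset.Icc 1 n = insert 1 (insert 2 (Finset.Icc 3 n)) := by
    ext m
    simp only [Finset.mem_Icc, Finset.mem_insert]
    omega
  have h1ni : (1 : ℕ) ∉ insert 2 (Finset.Icc 3 n) := by
    simp [Finset.mem_Icc]
  have h2ni : (2 : ℕ) ∉ Finset.Icc 3 n := by simp
  have e3eq : br (eN 1) (eN 1) = eN 3 := by
    rw [hee1 1 le_rfl (by omega), if_pos rfl]
  have dEi : ∀ i, 3 ≤ i → i ≤ n → d (eN i) =
      (((i : ℂ) - 1) * a 1) • eN i + ∑ t ∈ Finset.Icc 3 n, a t • eN (i + t - 2) := by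
    intro i hi3
    induction i, hi3 using Nat.le_induction with
    | base =>
        intro h3n
        have h := hder (eN 1) (eN 1)
        rw [e3eq, hA] at h
        simp only [map_sum, map_smul, LinearMap.sum_apply, LinearMap.smul_apply] at h
        have hsnd : ∑ m ∈ Finset.Icc 1 n, a m • br (eN 1) (eN m) = a 1 • eN 3 := by
          rw [Finset.sum_eq_single_of_mem 1 (by simp [Finset.mem_Icc]; omega)]
          · rw [e3eq]
          · intro m hm hne
            rw [Finset.mem_Icc] at hm
            by_cases h2 : m = 2
            · subst h2; rw [ha2, zero_smul]
            · rw [hee0 1 m le_rfl (by omega) (by omega) hm.2, smul_zero]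
        have hfst : ∑ m ∈ Finset.Icc 1 n, a m • br (eN m) (eN 1)
            = a 1 • eN 3 + (0 + ∑ t ∈ Finset.Icc 3 n, a t • eN (3 + t - 2)) := by
          rw [split3, Finset.sum_insert h1ni, Finset.sum_insert h2ni]
          rw [hee1 1 le_rfl (by omega), if_pos rfl]
          rw [hee1 2 (by omega) (by omega), if_neg (by omega), if_pos rfl, smul_zero]
          have hcg : ∀ t ∈ Finset.Icc 3 n,
              a t • br (eN t) (eN 1) = a t • eN (3 + t - 2) := by
            intro t ht
            rw [Finset.mem_Icc] at ht
            rw [bre1 t ht.1, show 3 + t - 2 = t + 1 by omega]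
          rw [Finset.sum_congr rfl hcg]
        rw [hfst, hsnd] at h
        rw [h, show (((3 : ℕ) : ℂ) - 1) * a 1 = a 1 + a 1 by push_cast; ring, add_smul]
        abel
    | succ i hi ih =>
        intro hin1
        have hin : i ≤ n := by omega
        have ei1 : br (eN i) (eN 1) = eN (i + 1) := bre1 i hi
        have h := hder (eN i) (eN 1)
        rw [ei1, ih hin, hA] at h
        simp only [map_add, map_sum, map_smul, LinearMap.add_apply, LinearMap.sum_apply,
          LinearMap.smul_apply] at h
        have h3 : ∑ m ∈ Finset.Icc 1 n, a m • br (eN i) (eN m) = a 1 • eN (i + 1) := by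
          rw [Finset.sum_eq_single_of_mem 1 (by simp [Finset.mem_Icc]; omega)]
          · rw [ei1]
          · intro m hm hne
            rw [Finset.mem_Icc] at hm
            by_cases h2 : m = 2
            · subst h2; rw [ha2, zero_smul]
            · rw [hee0 i m (by omega) hin (by omega) hm.2, smul_zero]
        have h2' : ∑ t ∈ Finset.Icc 3 n, a t • br (eN (i + t - 2)) (eN 1)
            = ∑ t ∈ Finset.Icc 3 n, a t • eN (i + 1 + t - 2) := by
          refine Finset.sum_congr rfl fun t ht => ?_
          rw [Finset.mem_Icc] at ht
          rw [bre1 (i + t - 2) (by omega), show i + t - 2 + 1 = i + 1 + t - 2 by omega]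
        rw [h3, h2', ei1] at h
        rw [h, show (((i + 1 : ℕ) : ℂ) - 1) * a 1 = ((i : ℂ) - 1) * a 1 + a 1 by
          push_cast; ring, add_smul]
        abel
  -- Step C : the key relation from [e1,e2]
  have eqKey : ∑ k ∈ Finset.Icc 4 n, β k • ((((k : ℂ) - 1) * a 1) • eN k) =
      a 1 • (∑ k ∈ Finset.Icc 4 n, β k • eN k) +
      (c 1 • eN 3 + c 2 • (∑ k ∈ Finset.Icc 4 n, β k • eN k)) := by
    have h := hder (eN 1) (eN 2)
    rw [hee2a] at h
    have hLHS : d (∑ k ∈ Finset.Icc 4 n, β k • eN k)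
        = ∑ k ∈ Finset.Icc 4 n, β k • ((((k : ℂ) - 1) * a 1) • eN k)
          + ∑ k ∈ Finset.Icc 4 n, β k • ∑ t ∈ Finset.Icc 3 n, a t • eN (k + t - 2) := by
      rw [map_sum, ← Finset.sum_add_distrib]
      refine Finset.sum_congr rfl fun k hk => ?_
      rw [Finset.mem_Icc] at hk
      rw [map_smul, dEi k (by omega) hk.2, smul_add]
    have hRHS1 : br (d (eN 1)) (eN 2)
        = a 1 • (∑ k ∈ Finset.Icc 4 n, β k • eN k)
          + ∑ m ∈ Finset.Icc 3 n, a m • ∑ k ∈ Finset.Icc 4 n, β k • eN (m + k - 2) := by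
      rw [hA]
      simp only [map_sum, map_smul, LinearMap.sum_apply, LinearMap.smul_apply]
      rw [split3, Finset.sum_insert h1ni, Finset.sum_insert h2ni]
      rw [hee2a, ha2, zero_smul, zero_add]
      have hcg : ∀ m ∈ Finset.Icc 3 n, a m • br (eN m) (eN 2)
          = a m • ∑ k ∈ Finset.Icc 4 n, β k • eN (m + k - 2) := by
        intro m hm
        rw [Finset.mem_Icc] at hm
        rw [hee2c m hm.1 hm.2]
      rw [Finset.sum_congr rfl hcg]
    have hRHS2 : br (eN 1) (d (eN 2))
        = c 1 • eN 3 + c 2 • (∑ k ∈ Finset.Icc 4 n, β k • eN k) := by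
      rw [hC]
      simp only [map_sum, map_smul]
      rw [split3, Finset.sum_insert h1ni, Finset.sum_insert h2ni]
      rw [e3eq, hee2a]
      have hz : ∑ m ∈ Finset.Icc 3 n, c m • br (eN 1) (eN m) = 0 := by
        apply Finset.sum_eq_zero
        intro m hm
        rw [Finset.mem_Icc] at hm
        rw [hee0 1 m le_rfl (by omega) hm.1 hm.2, smul_zero]
      rw [hz, add_zero]
    have hD : ∑ k ∈ Finset.Icc 4 n, β k • ∑ t ∈ Finset.Icc 3 n, a t • eN (k + t - 2)
        = ∑ m ∈ Finset.Icc 3 n, a m • ∑ k ∈ Finset.Icc 4 n, β k • eN (m + k - 2) := by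
      simp only [Finset.smul_sum]
      rw [Finset.sum_comm]
      refine Finset.sum_congr rfl fun t ht => ?_
      refine Finset.sum_congr rfl fun k hk => ?_
      rw [smul_comm, show k + t - 2 = t + k - 2 by omega]
    rw [hLHS, hRHS1, hRHS2, ← hD] at h
    have h' : ∑ k ∈ Finset.Icc 4 n, β k • ((((k : ℂ) - 1) * a 1) • eN k)
        + ∑ k ∈ Finset.Icc 4 n, β k • ∑ t ∈ Finset.Icc 3 n, a t • eN (k + t - 2)
        = (a 1 • (∑ k ∈ Finset.Icc 4 n, β k • eN k)
          + (c 1 • eN 3 + c 2 • (∑ k ∈ Finset.Icc 4 n, β k • eN k)))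
          + ∑ k ∈ Finset.Icc 4 n, β k • ∑ t ∈ Finset.Icc 3 n, a t • eN (k + t - 2) := by
      rw [h]; abel
    exact add_right_cancel h'
  have hrel : ∀ t, 4 ≤ t → t ≤ n → β t * (((t : ℂ) - 1) * a 1) = a 1 * β t + c 2 * β t := by
    intro t ht4 htn
    have h := congrArg (⇑(ceF bas t)) eqKey
    simp only [map_add, map_sum, map_smul, smul_eq_mul] at h
    have hsum : ∑ k ∈ Finset.Icc 4 n, β k * ceF bas t (eN k) = β t := by
      rw [Finset.sum_eq_single_of_mem t (by simp [Finset.mem_Icc]; omega)]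
      · rw [ceE t t (by omega) htn, if_pos rfl, mul_one]
      · intro k hk hne
        rw [ceE t k (by omega) htn, if_neg hne, mul_zero]
    have hsum2 : ∑ k ∈ Finset.Icc 4 n, β k * (((k : ℂ) - 1) * a 1 * ceF bas t (eN k))
        = β t * (((t : ℂ) - 1) * a 1) := by
      rw [Finset.sum_eq_single_of_mem t (by simp [Finset.mem_Icc]; omega)]
      · rw [ceE t t (by omega) htn, if_pos rfl, mul_one]
      · intro k hk hne
        rw [ceE t k (by omega) htn, if_neg hne, mul_zero, mul_zero]
    have h3 : ceF bas t (eN 3) = 0 := by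
      rw [ceE t 3 (by omega) htn, if_neg (by omega)]
    rw [hsum, hsum2, h3, mul_zero, zero_add] at h
    exact h
  have hc1 : c 1 = 0 := by
    have h := congrArg (⇑(ceF bas 3)) eqKey
    simp only [map_add, map_sum, map_smul, smul_eq_mul] at h
    have hsum : ∑ k ∈ Finset.Icc 4 n, β k * ceF bas 3 (eN k) = 0 := by
      apply Finset.sum_eq_zero
      intro k hk
      rw [Finset.mem_Icc] at hk
      rw [ceE 3 k (by omega) hn, if_neg (by omega), mul_zero]
    have hsum2 : ∑ k ∈ Finset.Icc 4 n, β k * (((k : ℂ) - 1) * a 1 * ceF bas 3 (eN k)) = 0 := by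
      apply Finset.sum_eq_zero
      intro k hk
      rw [Finset.mem_Icc] at hk
      rw [ceE 3 k (by omega) hn, if_neg (by omega), mul_zero, mul_zero]
    have h3 : ceF bas 3 (eN 3) = 1 := by
      rw [ceE 3 3 (by omega) hn, if_pos rfl]
    rw [hsum, hsum2, h3, mul_one, mul_zero, zero_add] at h
    linear_combination -h
  have ha1 : a 1 = 0 := by
    have hp := hrel p hp4 hpn
    have hq := hrel q hq4 hqn
    have hp' : ((p : ℂ) - 2) * a 1 = c 2 := by
      have h1 : β p * (((p : ℂ) - 1) * a 1) = β p * (a 1 + c 2) := by linear_combination hp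
      have h2 := mul_left_cancel₀ hbp h1
      linear_combination h2
    have hq' : ((q : ℂ) - 2) * a 1 = c 2 := by
      have h1 : β q * (((q : ℂ) - 1) * a 1) = β q * (a 1 + c 2) := by linear_combination hq
      have h2 := mul_left_cancel₀ hbq h1
      linear_combination h2
    have hsub : ((p : ℂ) - (q : ℂ)) * a 1 = 0 := by linear_combination hp' - hq'
    have hne : ((p : ℂ) - (q : ℂ)) ≠ 0 := by
      rw [sub_ne_zero]
      exact_mod_cast hpq
    rcases mul_eq_zero.mp hsub with h' | h'
    · exact absurd h' hne
    · exact h'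
  have hc2 : c 2 = 0 := by
    have h := hrel p hp4 hpn
    rw [ha1] at h
    have h2 : c 2 * β p = 0 := by linear_combination -h
    rcases mul_eq_zero.mp h2 with h' | h'
    · exact h'
    · exact absurd h' hbp
  have hb1 : b 1 = 0 := by
    have h := hab
    rw [ha1] at h
    linear_combination -h / 2
  -- the filtration
  set S : ℕ → Submodule ℂ V := fun k =>
    Submodule.span ℂ ((eN '' Set.Icc (k + 1) n) ∪ (yN '' Set.Icc (k + 1) n)) with hS
  have eS : ∀ k m, k + 1 ≤ m → eN m ∈ S k := by
    intro k m hm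
    by_cases h : m ≤ n
    · exact Submodule.subset_span (Or.inl ⟨m, ⟨hm, h⟩, rfl⟩)
    · rw [eN0 m (by omega)]; exact Submodule.zero_mem _
  have yS : ∀ k m, k + 1 ≤ m → yN m ∈ S k := by
    intro k m hm
    by_cases h : m ≤ n
    · exact Submodule.subset_span (Or.inr ⟨m, ⟨hm, h⟩, rfl⟩)
    · rw [yN0 m (by omega)]; exact Submodule.zero_mem _
  have Santi : ∀ k l, k ≤ l → S l ≤ S k := by
    intro k l hkl
    apply Submodule.span_mono
    apply Set.union_subset_union <;>
      exact Set.image_mono (Set.Icc_subset_Icc_left (by omega))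
  have dES : ∀ m, 1 ≤ m → m ≤ n → d (eN m) ∈ S m := by
    intro m hm1 hmn
    by_cases h1 : m = 1
    · subst h1
      rw [hA]
      apply Submodule.sum_mem
      intro m' hm'
      rw [Finset.mem_Icc] at hm'
      by_cases hm1' : m' = 1
      · subst hm1'; rw [ha1, zero_smul]; exact Submodule.zero_mem _
      · exact Submodule.smul_mem _ _ (eS 1 m' (by omega))
    · by_cases h2 : m = 2
      · subst h2
        rw [hC]
        apply Submodule.sum_mem
        intro m' hm'
        rw [Finset.mem_Icc] at hm'
        by_cases hm1' : m' = 1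
        · subst hm1'; rw [hc1, zero_smul]; exact Submodule.zero_mem _
        · by_cases hm2' : m' = 2
          · subst hm2'; rw [hc2, zero_smul]; exact Submodule.zero_mem _
          · exact Submodule.smul_mem _ _ (eS 2 m' (by omega))
      · rw [dEi m (by omega) hmn]
        apply Submodule.add_mem
        · rw [ha1, mul_zero, zero_smul]; exact Submodule.zero_mem _
        · apply Submodule.sum_mem
          intro t ht
          rw [Finset.mem_Icc] at ht
          exact Submodule.smul_mem _ _ (eS m (m + t - 2) (by omega))
  have brS : ∀ k, ∀ v ∈ S k, br v (eN 1) ∈ S (k + 1) := by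
    intro k v hv
    induction hv using Submodule.span_induction with
    | mem x hx =>
        rcases hx with ⟨m, ⟨hm1, hm2⟩, rfl⟩ | ⟨m, ⟨hm1, hm2⟩, rfl⟩
        · by_cases h1 : m = 1
          · subst h1
            rw [hee1 1 le_rfl (by omega), if_pos rfl]
            exact eS (k + 1) 3 (by omega)
          · by_cases h2 : m = 2
            · subst h2
              rw [hee1 2 (by omega) (by omega), if_neg (by omega), if_pos rfl]
              exact Submodule.zero_mem _
            · rw [bre1 m (by omega)]
              exact eS (k + 1) (m + 1) (by omega)
        · rw [hye1 m (by omega) hm2]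
          exact yS (k + 1) (m + 1) (by omega)
    | zero => rw [map_zero, LinearMap.zero_apply]; exact Submodule.zero_mem _
    | add x y hx hy ihx ihy =>
        rw [map_add, LinearMap.add_apply]; exact Submodule.add_mem _ ihx ihy
    | smul r x hx ih =>
        rw [map_smul, LinearMap.smul_apply]; exact Submodule.smul_mem _ r ih
  have dYS : ∀ j, 1 ≤ j → j ≤ n → d (yN j) ∈ S j := by
    intro j hj1
    induction j, hj1 using Nat.le_induction with
    | base =>
        intro h1n
        rw [hB]
        apply Submodule.sum_mem
        intro m' hm'
        rw [Finset.mem_Icc] at hm'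
        by_cases hm1' : m' = 1
        · subst hm1'; rw [hb1, zero_smul]; exact Submodule.zero_mem _
        · exact Submodule.smul_mem _ _ (yS 1 m' (by omega))
    | succ j hj ih =>
        intro hj1n
        have hjn : j ≤ n := by omega
        have h := hder (yN j) (eN 1)
        rw [hye1 j (by omega) hjn] at h
        have hz : br (yN j) (d (eN 1)) = 0 := by
          rw [hA, map_sum]
          apply Finset.sum_eq_zero
          intro m hm
          rw [Finset.mem_Icc] at hm
          rw [map_smul]
          by_cases h1 : m = 1
          · subst h1; rw [ha1, zero_smul]
          · by_cases h2 : m = 2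
            · subst h2; rw [ha2, zero_smul]
            · rw [hye0 j m (by omega) hjn (by omega) hm.2, smul_zero]
        rw [hz, add_zero] at h
        rw [h]
        exact brS j _ (ih hjn)
  have dstep : ∀ k, ∀ v ∈ S k, d v ∈ S (k + 1) := by
    intro k v hv
    induction hv using Submodule.span_induction with
    | mem x hx =>
        rcases hx with ⟨m, ⟨hm1, hm2⟩, rfl⟩ | ⟨m, ⟨hm1, hm2⟩, rfl⟩
        · exact Santi (k + 1) m hm1 (dES m (by omega) hm2)
        · exact Santi (k + 1) m hm1 (dYS m (by omega) hm2)
    | zero => rw [map_zero]; exact Submodule.zero_mem _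
    | add x y hx hy ihx ihy => rw [map_add]; exact Submodule.add_mem _ ihx ihy
    | smul r x hx ih => rw [map_smul]; exact Submodule.smul_mem _ r ih
  have S0 : ∀ v : V, v ∈ S 0 := by
    intro v
    have htop : (⊤ : Submodule ℂ V) ≤ S 0 := by
      rw [← bas.span_eq]
      rw [Submodule.span_le]
      rintro x ⟨i, rfl⟩
      cases i with
      | inl j =>
          have : bas (Sum.inl j) = eN ((j : ℕ) + 1) := by
            rw [heN ((j : ℕ) + 1) ⟨by omega, by omega⟩]
            congr 1
          rw [this]
          exact eS 0 _ (by omega)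
      | inr j =>
          have : bas (Sum.inr j) = yN ((j : ℕ) + 1) := by
            rw [hyN ((j : ℕ) + 1) ⟨by omega, by omega⟩]
            congr 1
          rw [this]
          exact yS 0 _ (by omega)
    exact htop trivial
  have Sn : ∀ v ∈ S n, v = 0 := by
    intro v hv
    simp only [hS] at hv
    have hempty : Set.Icc (n + 1) n = (∅ : Set ℕ) := Set.Icc_eq_empty (by omega)
    rw [hempty] at hv
    simp only [Set.image_empty, Set.union_empty, Submodule.span_empty,
      Submodule.mem_bot] at hv
    exact hv
  exact ⟨n, nilp_of_filtration d S S0 dstep n Sn⟩
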